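/- Let r = 0, x > 0, k = 2, and define on 𝒲 = {(λ₁,λ₂) : λ₁ > λ₂ > 0} the function φ(λ₁,λ₂) = |λ₁J₁(xλ₁)J₀(xλ₂) − λ₂J₁(xλ₂)J₀(xλ₁)|⁴/(λ₁²−λ₂²)² · λ₁λ₂. Then ∫_𝒲 φ dλ = ∞. -/

import Mathlib

open MeasureTheory

/-- Bessel function of the first kind of natural order `r`, via its power series. -/
noncomputable def besselJ (r : ℕ) (s : ℝ) : ℝ :=
  ∑' l : ℕ, ((-1 : ℝ)) ^ l * (s / 2) ^ (2 * l + r) / ((l.factorial : ℝ) * ((r + l).factorial : ℝ))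


namespace BesselAux

noncomputable def term (r l : ℕ) (s : ℝ) : ℝ :=
  ((-1 : ℝ)) ^ l * (s / 2) ^ (2 * l + r) / ((l.factorial : ℝ) * ((r + l).factorial : ℝ))

noncomputable def dterm (r l : ℕ) (s : ℝ) : ℝ :=
  ((-1 : ℝ)) ^ l * (((2 * l + r : ℕ) : ℝ) * (s / 2) ^ (2 * l + r - 1) * (1/2))
    / ((l.factorial : ℝ) * ((r + l).factorial : ℝ))

lemma besselJ_eq_tsum (r : ℕ) (s : ℝ) : besselJ r s = ∑' l, term r l s := rfl

lemma hasDerivAt_term (r l : ℕ) (s : ℝ) : HasDerivAt (term r l) (dterm r l s) s := by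
  have h : HasDerivAt (fun s : ℝ => (s / 2) ^ (2 * l + r))
      (((2 * l + r : ℕ) : ℝ) * (s / 2) ^ (2 * l + r - 1) * (1/2)) s := by
    have h0 : HasDerivAt (fun s : ℝ => s / 2) (1/2) s := (hasDerivAt_id s).div_const 2
    simpa using h0.fun_pow (2 * l + r)
  have := (h.const_mul ((-1 : ℝ) ^ l)).div_const ((l.factorial : ℝ) * ((r + l).factorial : ℝ))
  unfold term
  simpa [dterm, mul_assoc] using this

noncomputable def bnd (R : ℝ) (l : ℕ) : ℝ := 2 * R * ((2 * R ^ 2) ^ l / l.factorial)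

lemma summable_bnd (R : ℝ) : Summable (bnd R) :=
  (Real.summable_pow_div_factorial (2 * R ^ 2)).mul_left (2 * R)

lemma term_bound (r l : ℕ) (hr : r ≤ 1) {R y : ℝ} (hR : 1 ≤ R) (hy : |y| ≤ R) :
    ‖term r l y‖ ≤ bnd R l := by
  have hR0 : (0:ℝ) < R := lt_of_lt_of_le one_pos hR
  have h1 : |y / 2| ≤ R := by
    rw [abs_div]
    calc |y| / |(2:ℝ)| ≤ R / 2 := by rw [abs_two]; linarith
    _ ≤ R := by linarith
  have h2 : |y / 2| ^ (2 * l + r) ≤ R ^ (2 * l + 1) := by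
    calc |y / 2| ^ (2 * l + r) ≤ R ^ (2 * l + r) := pow_le_pow_left₀ (abs_nonneg _) h1 _
    _ ≤ R ^ (2 * l + 1) := pow_le_pow_right₀ hR (by omega)
  have hfl : (1:ℝ) ≤ (l.factorial : ℝ) := by exact_mod_cast Nat.one_le_iff_ne_zero.mpr l.factorial_ne_zero
  have hfl2 : (1:ℝ) ≤ ((r+l).factorial : ℝ) := by exact_mod_cast Nat.one_le_iff_ne_zero.mpr (r+l).factorial_ne_zero
  have hnorm : ‖term r l y‖ = |y/2| ^ (2*l+r) / ((l.factorial : ℝ) * ((r + l).factorial : ℝ)) := by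
    simp [term, abs_div, abs_mul, abs_pow, abs_neg, abs_one]
  rw [hnorm, bnd]
  have hden : (l.factorial : ℝ) ≤ (l.factorial : ℝ) * ((r + l).factorial : ℝ) := by nlinarith
  have haux : R ^ (2*l+1) ≤ 2 * R * (2*R^2)^l := by
    have h1' : R ^ (2*l+1) = R * (R^2)^l := by ring
    rw [h1']
    have h2' : (R^2)^l ≤ (2*R^2)^l := pow_le_pow_left₀ (by positivity) (by nlinarith) l
    nlinarith [pow_nonneg (by positivity : (0:ℝ) ≤ R^2) l]
  calc |y/2| ^ (2*l+r) / ((l.factorial : ℝ) * ((r + l).factorial : ℝ))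
      ≤ R ^ (2*l+1) / (l.factorial : ℝ) := div_le_div₀ (by positivity) h2 (by positivity) hden
    _ ≤ 2 * R * (2 * R ^ 2) ^ l / l.factorial :=
        div_le_div₀ (by positivity) haux (by positivity) le_rfl
    _ = 2 * R * ((2 * R ^ 2) ^ l / l.factorial) := by ring

lemma dterm_bound (r l : ℕ) (hr : r ≤ 1) {R y : ℝ} (hR : 1 ≤ R) (hy : |y| ≤ R) :
    ‖dterm r l y‖ ≤ bnd R l := by
  have hR0 : (0:ℝ) < R := lt_of_lt_of_le one_pos hR
  have h1 : |y / 2| ≤ R := by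
    rw [abs_div]
    calc |y| / |(2:ℝ)| ≤ R / 2 := by rw [abs_two]; linarith
    _ ≤ R := by linarith
  have h2 : |y / 2| ^ (2 * l + r - 1) ≤ R ^ (2 * l + 1) := by
    calc |y / 2| ^ (2*l+r-1) ≤ R ^ (2*l+r-1) := pow_le_pow_left₀ (abs_nonneg _) h1 _
    _ ≤ R ^ (2 * l + 1) := pow_le_pow_right₀ hR (by omega)
  have hfl : (1:ℝ) ≤ (l.factorial : ℝ) := by exact_mod_cast Nat.one_le_iff_ne_zero.mpr l.factorial_ne_zero
  have hfl2 : (1:ℝ) ≤ ((r+l).factorial : ℝ) := by exact_mod_cast Nat.one_le_iff_ne_zero.mpr (r+l).factorial_ne_zero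
  have hl2 : ((2*l+r : ℕ) : ℝ) ≤ 2 * 2 ^ l := by
    have h := Nat.lt_two_pow_self (n := l)
    have : (l:ℝ) + 1 ≤ 2 ^ l := by exact_mod_cast h
    push_cast
    have hr' : (r:ℝ) ≤ 1 := by exact_mod_cast hr
    nlinarith
  have hnorm : ‖dterm r l y‖
      = ((2*l+r : ℕ) : ℝ) * |y/2| ^ (2*l+r-1) * (1/2) / ((l.factorial : ℝ) * ((r + l).factorial : ℝ)) := by
    simp [dterm, abs_div, abs_mul, abs_pow, abs_neg, abs_one,
      abs_of_nonneg (show (0:ℝ) ≤ 2*(l:ℝ)+(r:ℝ) by positivity)]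
  rw [hnorm, bnd]
  have key : ((2*l+r : ℕ) : ℝ) * |y/2| ^ (2*l+r-1) * (1/2) ≤ 2^l * R^(2*l+1) := by
    have hpow_nonneg : (0:ℝ) ≤ |y/2| ^ (2*l+r-1) := by positivity
    have h2l : (0:ℝ) ≤ ((2*l+r : ℕ) : ℝ) := by positivity
    nlinarith [pow_pos (by norm_num : (0:ℝ) < 2) l, pow_pos hR0 (2*l+1)]
  have hden : (l.factorial : ℝ) ≤ (l.factorial : ℝ) * ((r + l).factorial : ℝ) := by nlinarith
  have heq : (2:ℝ)^l * R^(2*l+1) = R * (2*R^2)^l := by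
    rw [mul_pow]; ring
  calc ((2*l+r : ℕ) : ℝ) * |y/2| ^ (2*l+r-1) * (1/2) / ((l.factorial : ℝ) * ((r + l).factorial : ℝ))
      ≤ (2^l * R^(2*l+1)) / (l.factorial : ℝ) := div_le_div₀ (by positivity) key (by positivity) hden
    _ = R * (2*R^2)^l / l.factorial := by rw [heq]
    _ ≤ 2 * R * ((2 * R ^ 2) ^ l / l.factorial) := by
        rw [mul_div_assoc]
        have : (0:ℝ) ≤ (2*R^2)^l / l.factorial := by positivity
        nlinarith

lemma summable_term (r : ℕ) (hr : r ≤ 1) (y : ℝ) : Summable (fun l => term r l y) := by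
  apply Summable.of_norm_bounded (summable_bnd (max |y| 1))
  intro l
  exact term_bound r l hr (le_max_right _ _) (le_max_left _ _)

lemma summable_dterm (r : ℕ) (hr : r ≤ 1) (y : ℝ) : Summable (fun l => dterm r l y) := by
  apply Summable.of_norm_bounded (summable_bnd (max |y| 1))
  intro l
  exact dterm_bound r l hr (le_max_right _ _) (le_max_left _ _)

lemma hasDerivAt_besselJ (r : ℕ) (hr : r ≤ 1) (s : ℝ) :
    HasDerivAt (besselJ r) (∑' l, dterm r l s) s := by
  set R := |s| + 1 with hR
  have hR1 : 1 ≤ R := by rw [hR]; linarith [abs_nonneg s]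
  have hmem : s ∈ Metric.ball (0:ℝ) R := by
    simp [Real.ball_eq_Ioo, hR]
    constructor <;> [linarith [neg_abs_le s]; linarith [le_abs_self s]]
  have h := hasDerivAt_tsum_of_isPreconnected (summable_bnd R) Metric.isOpen_ball
    (convex_ball (0:ℝ) R).isPreconnected
    (fun l y _ => hasDerivAt_term r l y)
    (fun l y hy => dterm_bound r l hr hR1
      (by rw [← Real.norm_eq_abs]; exact (mem_ball_zero_iff.mp hy).le))
    (mem_ball_zero_iff.mpr (by simp [hR]; positivity) : (0:ℝ) ∈ Metric.ball (0:ℝ) R)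
    (summable_term r hr 0) hmem
  exact h

end BesselAux

namespace BesselAux2
open BesselAux

lemma tsum_dterm0 (s : ℝ) : ∑' l, dterm 0 l s = - besselJ 1 s := by
  rw [Summable.tsum_eq_zero_add (summable_dterm 0 (by norm_num) s)]
  have h0 : dterm 0 0 s = 0 := by simp [dterm]
  rw [h0, zero_add, besselJ_eq_tsum]
  rw [← tsum_neg]
  apply tsum_congr
  intro l
  have hfact : ((l+1).factorial : ℝ) = (l+1) * l.factorial := by
    rw [Nat.factorial_succ]; push_cast; ring
  have hexp : 2 * (l+1) + 0 - 1 = 2*l + 1 := by omega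
  have hexp2 : 2 * l + 1 = 2*l+1 := rfl
  simp only [dterm, term, hexp]
  rw [pow_succ]
  have h1 : ((0:ℕ)+(l+1)).factorial = (l+1).factorial := by norm_num
  have h2 : ((1:ℕ)+l).factorial = (l+1).factorial := by rw [Nat.add_comm]
  rw [h1, h2, hfact]
  have hl1 : ((l:ℝ)+1) ≠ 0 := by positivity
  have hlf : (l.factorial : ℝ) ≠ 0 := by exact_mod_cast l.factorial_ne_zero
  push_cast
  field_simp
  ring

lemma tsum_dterm1 {s : ℝ} (hs : s ≠ 0) :
    ∑' l, dterm 1 l s = besselJ 0 s - besselJ 1 s / s := by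
  have hsub : besselJ 0 s - besselJ 1 s / s = ∑' l, (term 0 l s - term 1 l s / s) := by
    rw [besselJ_eq_tsum, besselJ_eq_tsum, ← tsum_div_const]
    exact (Summable.tsum_sub (summable_term 0 (by norm_num) s)
      ((summable_term 1 (by norm_num) s).div_const s)).symm
  rw [hsub]
  apply tsum_congr
  intro l
  have hfact : ((l+1).factorial : ℝ) = (l+1) * l.factorial := by
    rw [Nat.factorial_succ]; push_cast; ring
  have h2 : ((1:ℕ)+l).factorial = (l+1).factorial := by rw [Nat.add_comm]
  have h1 : ((0:ℕ)+l).factorial = l.factorial := by norm_num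
  have hexp : 2 * l + 1 - 1 = 2*l := by omega
  simp only [dterm, term, h1, h2, hexp, hfact]
  have hl1 : ((l:ℝ)+1) ≠ 0 := by positivity
  have hlf : (l.factorial : ℝ) ≠ 0 := by exact_mod_cast l.factorial_ne_zero
  rw [pow_succ]
  push_cast
  field_simp
  ring

lemma hasDerivAt_J0 (s : ℝ) : HasDerivAt (besselJ 0) (- besselJ 1 s) s := by
  have := hasDerivAt_besselJ 0 (by norm_num) s
  rwa [tsum_dterm0] at this

lemma hasDerivAt_J1 {s : ℝ} (hs : s ≠ 0) :
    HasDerivAt (besselJ 1) (besselJ 0 s - besselJ 1 s / s) s := by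
  have := hasDerivAt_besselJ 1 (by norm_num) s
  rwa [tsum_dterm1 hs] at this

lemma continuous_J0 : Continuous (besselJ 0) :=
  continuous_iff_continuousAt.mpr (fun s => (hasDerivAt_J0 s).continuousAt)

lemma abs_tsum_le {f : ℕ → ℝ} {c : ℝ} (h : ∀ l, |f l| ≤ c * (1/4)^l) :
    |∑' l, f l| ≤ c * (4/3) := by
  have hgeo : Summable (fun l : ℕ => c * (1/4)^l) :=
    (summable_geometric_of_lt_one (by norm_num) (by norm_num)).mul_left c
  have hf : Summable f := by
    apply Summable.of_norm_bounded hgeo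
    intro l; rw [Real.norm_eq_abs]; exact h l
  calc |∑' l, f l| ≤ ∑' l, |f l| := by
        rw [← Real.norm_eq_abs]
        exact norm_tsum_le_tsum_norm (by simpa [Real.norm_eq_abs] using hf.abs)
    _ ≤ ∑' l, c * (1/4)^l := Summable.tsum_le_tsum (fun l => h l) hf.abs hgeo
    _ = c * ∑' l : ℕ, (1/4)^l := by rw [tsum_mul_left]
    _ = c * (4/3) := by
        rw [tsum_geometric_of_lt_one (by norm_num) (by norm_num)]; norm_num

end BesselAux2

namespace BesselAux3
open BesselAux BesselAux2

lemma fact_ge_one (n : ℕ) : (1:ℝ) ≤ (n.factorial : ℝ) := by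
  exact_mod_cast Nat.one_le_iff_ne_zero.mpr n.factorial_ne_zero

lemma abs_J1_le {t : ℝ} (h0 : 0 ≤ t) (h1 : t ≤ 1) : |besselJ 1 t| ≤ t := by
  have key : ∀ l, |term 1 l t| ≤ (t/2) * (1/4)^l := by
    intro l
    have habs : |term 1 l t| = (t/2)^(2*l+1) / ((l.factorial : ℝ) * ((1+l).factorial : ℝ)) := by
      simp [term, abs_div, abs_mul, abs_pow, abs_neg, abs_one, abs_of_nonneg (by linarith : (0:ℝ) ≤ t/2)]
    rw [habs]
    have hp : (t/2)^(2*l+1) ≤ (t/2) * (1/4)^l := by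
      rw [pow_succ, pow_mul]
      have h2 : ((t/2)^2)^l ≤ (1/4)^l := by
        apply pow_le_pow_left₀ (by positivity)
        nlinarith
      nlinarith [pow_nonneg (by positivity : (0:ℝ) ≤ (t/2)^2) l,
        pow_nonneg (by norm_num : (0:ℝ) ≤ (1/4:ℝ)) l]
    have hden : (1:ℝ) ≤ (l.factorial : ℝ) * ((1+l).factorial : ℝ) := by
      nlinarith [fact_ge_one l, fact_ge_one (1+l)]
    calc (t/2)^(2*l+1) / ((l.factorial : ℝ) * ((1+l).factorial : ℝ))
        ≤ (t/2)^(2*l+1) / 1 := by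
          apply div_le_div_of_nonneg_left (by positivity) (by norm_num) hden
      _ = (t/2)^(2*l+1) := by ring
      _ ≤ (t/2) * (1/4)^l := hp
  have := abs_tsum_le key
  rw [← besselJ_eq_tsum] at this
  calc |besselJ 1 t| ≤ (t/2) * (4/3) := this
    _ ≤ t := by linarith

lemma J0_ge {t : ℝ} (h0 : 0 ≤ t) (h1 : t ≤ 1) : (1:ℝ)/2 ≤ besselJ 0 t := by
  have hsum := summable_term 0 (by norm_num) t
  have hsplit : besselJ 0 t = term 0 0 t + ∑' l, term 0 (l+1) t := by
    rw [besselJ_eq_tsum]; exact Summable.tsum_eq_zero_add hsum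
  have h00 : term 0 0 t = 1 := by simp [term]
  have key : ∀ l, |term 0 (l+1) t| ≤ (1/4) * (1/4)^l := by
    intro l
    have habs : |term 0 (l+1) t| = (t/2)^(2*(l+1)) / (((l+1).factorial : ℝ) * ((0+(l+1)).factorial : ℝ)) := by
      simp [term, abs_div, abs_mul, abs_pow, abs_neg, abs_one, abs_of_nonneg (by linarith : (0:ℝ) ≤ t/2)]
    rw [habs]
    have hp : (t/2)^(2*(l+1)) ≤ (1/4) * (1/4)^l := by
      rw [pow_mul, pow_succ]
      have h2 : ((t/2)^2)^l ≤ (1/4)^l := by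
        apply pow_le_pow_left₀ (by positivity); nlinarith
      have h3 : (t/2)^2 ≤ 1/4 := by nlinarith
      nlinarith [pow_nonneg (by positivity : (0:ℝ) ≤ (t/2)^2) l,
        pow_nonneg (by norm_num : (0:ℝ) ≤ (1/4:ℝ)) l]
    have hden : (1:ℝ) ≤ ((l+1).factorial : ℝ) * ((0+(l+1)).factorial : ℝ) := by
      nlinarith [fact_ge_one (l+1), fact_ge_one (0+(l+1))]
    calc (t/2)^(2*(l+1)) / (((l+1).factorial : ℝ) * ((0+(l+1)).factorial : ℝ))
        ≤ (t/2)^(2*(l+1)) / 1 := by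
          apply div_le_div_of_nonneg_left (by positivity) (by norm_num) hden
      _ = (t/2)^(2*(l+1)) := by ring
      _ ≤ (1/4) * (1/4)^l := hp
  have htail := abs_tsum_le key
  have : |∑' l, term 0 (l+1) t| ≤ 1/3 := by linarith [htail]
  have := abs_le.mp this
  rw [hsplit, h00]
  linarith [this.1]

lemma J1_one_ge : (2:ℝ)/5 ≤ besselJ 1 1 := by
  have hsum := summable_term 1 (by norm_num) (1:ℝ)
  have hsplit : besselJ 1 1 = term 1 0 1 + ∑' l, term 1 (l+1) 1 := by
    rw [besselJ_eq_tsum]; exact Summable.tsum_eq_zero_add hsum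
  have h00 : term 1 0 1 = 1/2 := by norm_num [term]
  have key : ∀ l, |term 1 (l+1) (1:ℝ)| ≤ (1/16) * (1/4)^l := by
    intro l
    have habs : |term 1 (l+1) (1:ℝ)|
        = ((1:ℝ)/2)^(2*(l+1)+1) / (((l+1).factorial : ℝ) * ((1+(l+1)).factorial : ℝ)) := by
      simp [term, abs_div, abs_mul, abs_pow, abs_neg, abs_one, abs_inv, abs_two]
    rw [habs]
    have hp : ((1:ℝ)/2)^(2*(l+1)+1) = (1/8) * (1/4)^l := by
      have h3 : 2*(l+1)+1 = 2*l + 3 := by omega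
      rw [h3, pow_add, pow_mul]
      norm_num [mul_comm]
    have hden : (2:ℝ) ≤ ((l+1).factorial : ℝ) * ((1+(l+1)).factorial : ℝ) := by
      have h1 : (1:ℝ) ≤ ((l+1).factorial : ℝ) := fact_ge_one _
      have h2 : (2:ℝ) ≤ ((1+(l+1)).factorial : ℝ) := by
        have : 2 ≤ (1+(l+1)).factorial := Nat.self_le_factorial _ |>.trans' (by omega)
        exact_mod_cast this
      nlinarith
    rw [hp]
    calc (1/8) * (1/4:ℝ)^l / (((l+1).factorial : ℝ) * ((1+(l+1)).factorial : ℝ))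
        ≤ (1/8) * (1/4:ℝ)^l / 2 := by
          apply div_le_div_of_nonneg_left (by positivity) (by norm_num) hden
      _ = (1/16) * (1/4)^l := by ring
  have htail := abs_tsum_le key
  have h13 : |∑' l, term 1 (l+1) (1:ℝ)| ≤ 1/12 := by linarith [htail]
  have := abs_le.mp h13
  rw [hsplit, h00]
  linarith [this.1]

lemma abs_J_one_le (r : ℕ) (hr : r ≤ 1) : |besselJ r 1| ≤ 3/2 := by
  have key : ∀ l, |term r l (1:ℝ)| ≤ 1 * (1/4)^l := by
    intro l
    have habs : |term r l (1:ℝ)| = ((1:ℝ)/2)^(2*l+r) / ((l.factorial : ℝ) * ((r+l).factorial : ℝ)) := by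
      simp [term, abs_div, abs_mul, abs_pow, abs_neg, abs_one, abs_inv, abs_two]
    rw [habs]
    have hp : ((1:ℝ)/2)^(2*l+r) ≤ (1/4)^l := by
      calc ((1:ℝ)/2)^(2*l+r) ≤ ((1:ℝ)/2)^(2*l) := by
            apply pow_le_pow_of_le_one (by norm_num) (by norm_num) (by omega)
        _ = (1/4)^l := by rw [pow_mul]; norm_num
    have hden : (1:ℝ) ≤ (l.factorial : ℝ) * ((r+l).factorial : ℝ) := by
      nlinarith [fact_ge_one l, fact_ge_one (r+l)]
    calc ((1:ℝ)/2)^(2*l+r) / ((l.factorial : ℝ) * ((r+l).factorial : ℝ))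
        ≤ ((1:ℝ)/2)^(2*l+r) / 1 := by
          apply div_le_div_of_nonneg_left (by positivity) (by norm_num) hden
      _ = ((1:ℝ)/2)^(2*l+r) := by ring
      _ ≤ (1/4)^l := hp
      _ ≤ 1 * (1/4)^l := by linarith [pow_nonneg (by norm_num : (0:ℝ) ≤ (1/4:ℝ)) l]
  have := abs_tsum_le key
  rw [← besselJ_eq_tsum] at this
  linarith

end BesselAux3

namespace BesselMain
open BesselAux BesselAux2 BesselAux3

noncomputable def J0 (s : ℝ) : ℝ := besselJ 0 s
noncomputable def J1 (s : ℝ) : ℝ := besselJ 1 s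
noncomputable def P (s : ℝ) : ℝ := s * ((J0 s)^2 + (J1 s)^2) - J0 s * J1 s

lemma hasDerivAt_P {s : ℝ} (hs : s ≠ 0) :
    HasDerivAt P (J0 s * J1 s / s) s := by
  have h0 : HasDerivAt J0 (-J1 s) s := hasDerivAt_J0 s
  have h1 : HasDerivAt J1 (J0 s - J1 s / s) s := hasDerivAt_J1 hs
  have hsq : HasDerivAt (fun s => (J0 s)^2 + (J1 s)^2)
      (2 * J0 s * (-J1 s) + 2 * J1 s * (J0 s - J1 s / s)) s := by
    have a0 := h0.fun_pow 2
    have a1 := h1.fun_pow 2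
    have := a0.fun_add a1
    refine this.congr_deriv ?_
    push_cast
    ring
  have hmul : HasDerivAt (fun s => s * ((J0 s)^2 + (J1 s)^2))
      (1 * ((J0 s)^2 + (J1 s)^2) + s * (2 * J0 s * (-J1 s) + 2 * J1 s * (J0 s - J1 s / s))) s :=
    (hasDerivAt_id s).mul hsq
  have hprod : HasDerivAt (fun s => J0 s * J1 s)
      ((-J1 s) * J1 s + J0 s * (J0 s - J1 s / s)) s := h0.mul h1
  have := hmul.fun_sub hprod
  refine this.congr_deriv ?_
  field_simp
  ring

lemma P_nonneg_aux (s : ℝ) (hs : 1 ≤ s) :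
    (s - 1/2) * ((J0 s)^2 + (J1 s)^2) ≤ P s ∧ P s ≤ (s + 1/2) * ((J0 s)^2 + (J1 s)^2) := by
  have h := sq_nonneg (J0 s - J1 s)
  have h' := sq_nonneg (J0 s + J1 s)
  constructor <;> (unfold P; nlinarith)

lemma P_nonneg {s : ℝ} (hs : 1 ≤ s) : 0 ≤ P s := by
  have := (P_nonneg_aux s hs).1
  nlinarith [sq_nonneg (J0 s), sq_nonneg (J1 s)]

lemma contOn_P : ContinuousOn P (Set.Ici 1) := by
  intro s hs
  have : (1:ℝ) ≤ s := hs
  exact ((hasDerivAt_P (by linarith : s ≠ 0)).continuousAt).continuousWithinAt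

lemma P_lower {s : ℝ} (hs : 1 ≤ s) : P 1 * Real.exp (-1) ≤ P s := by
  set Q : ℝ → ℝ := fun s => P s * Real.exp (-(1/s)) with hQ
  have key : MonotoneOn Q (Set.Ici 1) := by
    apply monotoneOn_of_deriv_nonneg (convex_Ici 1)
    · refine contOn_P.mul ?_
      apply Real.continuous_exp.comp_continuousOn
      apply ContinuousOn.neg
      exact continuousOn_const.div continuousOn_id
        (fun s hs => by have : (1:ℝ) ≤ s := hs; intro h; rw [h] at this; linarith)
    · intro t ht
      rw [interior_Ici] at ht
      have ht1 : (1:ℝ) < t := ht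
      have hQ' : HasDerivAt Q (P t * (Real.exp (-(1/t)) * (1/t^2))
          + (J0 t * J1 t / t) * Real.exp (-(1/t))) t := by
        have hexp : HasDerivAt (fun s : ℝ => Real.exp (-(1/s))) (Real.exp (-(1/t)) * (1/t^2)) t := by
          have hinv : HasDerivAt (fun s : ℝ => -(1/s)) (1/t^2) t := by
            have := (hasDerivAt_inv (by linarith : t ≠ 0)).fun_neg
            simpa [one_div] using this
          simpa using hinv.exp
        have := (hasDerivAt_P (by linarith : t ≠ 0)).fun_mul hexp
        refine this.congr_deriv ?_
        ring
      exact (hQ'.differentiableAt).differentiableWithinAt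
    · intro t ht
      rw [interior_Ici] at ht
      have ht1 : (1: ℝ) < t := ht
      have hQ' : HasDerivAt Q (P t * (Real.exp (-(1/t)) * (1/t^2))
          + (J0 t * J1 t / t) * Real.exp (-(1/t))) t := by
        have hexp : HasDerivAt (fun s : ℝ => Real.exp (-(1/s))) (Real.exp (-(1/t)) * (1/t^2)) t := by
          have hinv : HasDerivAt (fun s : ℝ => -(1/s)) (1/t^2) t := by
            have := (hasDerivAt_inv (by linarith : t ≠ 0)).fun_neg
            simpa [one_div] using this
          simpa using hinv.exp
        have := (hasDerivAt_P (by linarith : t ≠ 0)).fun_mul hexp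
        refine this.congr_deriv ?_
        ring
      rw [hQ'.deriv]
      have hE : Real.exp (-(1/t)) > 0 := Real.exp_pos _
      -- P t / t² + J0 J1 / t ≥ 0
      have hPE := (P_nonneg_aux t ht1.le).1
      have hJJ : -( ((J0 t)^2 + (J1 t)^2) / 2) ≤ J0 t * J1 t := by nlinarith [sq_nonneg (J0 t + J1 t)]
      have ht0 : (0:ℝ) < t := by linarith
      have hE0 : 0 ≤ (J0 t)^2 + (J1 t)^2 := by positivity
      have key2 : 0 ≤ P t * (1/t^2) + J0 t * J1 t / t := by
        have h2 : 0 ≤ P t + t * (J0 t * J1 t) := by nlinarith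
        have h3 : (0:ℝ) ≤ (P t + t * (J0 t * J1 t))/t^2 := by positivity
        have h4 : (P t + t * (J0 t * J1 t))/t^2 = P t * (1/t^2) + J0 t * J1 t / t := by
          field_simp
        linarith [h4 ▸ h3]
      nlinarith
  have h1 : Q 1 ≤ Q s := key (by simp) (by simp [hs]) hs
  have h2 : Q 1 = P 1 * Real.exp (-1) := by simp [hQ]
  have h3 : Q s ≤ P s := by
    have hle : Real.exp (-(1/s)) ≤ 1 := by
      rw [Real.exp_le_one_iff]
      have : (0:ℝ) ≤ 1/s := by positivity
      linarith
    have hP0 : 0 ≤ P s := P_nonneg hs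
    have : Q s = P s * Real.exp (-(1/s)) := rfl
    nlinarith [Real.exp_pos (-(1/s))]
  rw [h2] at h1
  linarith

end BesselMain

namespace BesselMain
open BesselAux BesselAux2 BesselAux3

lemma P_upper {s : ℝ} (hs : 1 ≤ s) : P s ≤ P 1 * Real.exp 1 := by
  set Q : ℝ → ℝ := fun s => P s * Real.exp (1/s) with hQ
  have key : AntitoneOn Q (Set.Ici 1) := by
    apply antitoneOn_of_deriv_nonpos (convex_Ici 1)
    · refine contOn_P.mul ?_
      apply Real.continuous_exp.comp_continuousOn
      exact continuousOn_const.div continuousOn_id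
        (fun s hs => by have : (1:ℝ) ≤ s := hs; intro h; rw [h] at this; linarith)
    · intro t ht
      rw [interior_Ici] at ht
      have ht1 : (1:ℝ) < t := ht
      have hQ' : HasDerivAt Q (P t * (Real.exp (1/t) * (-(1/t^2)))
          + (J0 t * J1 t / t) * Real.exp (1/t)) t := by
        have hinv : HasDerivAt (fun s : ℝ => 1/s) (-(1/t^2)) t := by
          have := hasDerivAt_inv (by linarith : t ≠ 0)
          simpa [one_div] using this
        have hexp := hinv.exp
        have := (hasDerivAt_P (by linarith : t ≠ 0)).fun_mul hexp
        refine this.congr_deriv ?_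
        ring
      exact (hQ'.differentiableAt).differentiableWithinAt
    · intro t ht
      rw [interior_Ici] at ht
      have ht1 : (1:ℝ) < t := ht
      have ht0 : (0:ℝ) < t := by linarith
      have hQ' : HasDerivAt Q (P t * (Real.exp (1/t) * (-(1/t^2)))
          + (J0 t * J1 t / t) * Real.exp (1/t)) t := by
        have hinv : HasDerivAt (fun s : ℝ => 1/s) (-(1/t^2)) t := by
          have := hasDerivAt_inv (by linarith : t ≠ 0)
          simpa [one_div] using this
        have hexp := hinv.exp
        have := (hasDerivAt_P (by linarith : t ≠ 0)).fun_mul hexp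
        refine this.congr_deriv ?_
        ring
      rw [hQ'.deriv]
      have hE : Real.exp (1/t) > 0 := Real.exp_pos _
      have hPE := (P_nonneg_aux t ht1.le).1
      have hJJ : J0 t * J1 t ≤ ((J0 t)^2 + (J1 t)^2) / 2 := by nlinarith [sq_nonneg (J0 t - J1 t)]
      have hE0 : 0 ≤ (J0 t)^2 + (J1 t)^2 := by positivity
      have key2 : P t * (1/t^2) + J0 t * J1 t / t ≥ 0 → True := fun _ => trivial
      have h2 : 0 ≤ P t - t * (J0 t * J1 t) := by nlinarith
      have h3 : (0:ℝ) ≤ (P t - t * (J0 t * J1 t))/t^2 := by positivity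
      have h4 : (P t - t * (J0 t * J1 t))/t^2 = P t * (1/t^2) - J0 t * J1 t / t := by
        field_simp
      nlinarith
  have h1 : Q s ≤ Q 1 := key (by simp) (by simp [hs]) hs
  have h2 : Q 1 = P 1 * Real.exp 1 := by simp [hQ]
  have h3 : P s ≤ Q s := by
    have hge : (1:ℝ) ≤ Real.exp (1/s) := by
      rw [Real.one_le_exp_iff]
      positivity
    have hP0 : 0 ≤ P s := P_nonneg hs
    have hQs : Q s = P s * Real.exp (1/s) := rfl
    nlinarith
  rw [h2] at h1
  linarith

lemma P_one_lb : (2:ℝ)/25 ≤ P 1 := by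
  have h1 : (2:ℝ)/5 ≤ J1 1 := J1_one_ge
  have h2 : J0 1 * J1 1 ≤ ((J0 1)^2 + (J1 1)^2)/2 := by nlinarith [sq_nonneg (J0 1 - J1 1)]
  unfold P
  nlinarith [sq_nonneg (J0 1)]

lemma P_one_ub : P 1 ≤ 7 := by
  have h0 : |J0 1| ≤ 3/2 := abs_J_one_le 0 (by norm_num)
  have h1 : |J1 1| ≤ 3/2 := abs_J_one_le 1 (by norm_num)
  have h0' := abs_le.mp h0
  have h1' := abs_le.mp h1
  unfold P
  nlinarith [h0'.1, h0'.2, h1'.1, h1'.2]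

lemma P_ge {s : ℝ} (hs : 1 ≤ s) : 1/40 ≤ P s := by
  have h := P_lower hs
  have he : (1:ℝ)/3 ≤ Real.exp (-1) := by
    have hx : Real.exp 1 ≤ 3 := by
      calc Real.exp 1 ≤ 2.7182818286 := Real.exp_one_lt_d9.le
        _ ≤ 3 := by norm_num
    have hmul : Real.exp (-1) * Real.exp 1 = 1 := by
      rw [← Real.exp_add]; norm_num
    nlinarith [Real.exp_pos (-1), Real.exp_pos 1]
  nlinarith [P_one_lb]

lemma P_le {s : ℝ} (hs : 1 ≤ s) : P s ≤ 21 := by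
  have h := P_upper hs
  have he : Real.exp 1 ≤ 3 := by
    calc Real.exp 1 ≤ 2.7182818286 := Real.exp_one_lt_d9.le
      _ ≤ 3 := by norm_num
  nlinarith [P_one_lb, P_one_ub, Real.exp_pos 1]

lemma E_le {s : ℝ} (hs : 1 ≤ s) : s * ((J0 s)^2 + (J1 s)^2) ≤ 42 := by
  have hPE := (P_nonneg_aux s hs).1
  have hP := P_le hs
  have hE0 : 0 ≤ (J0 s)^2 + (J1 s)^2 := by positivity
  nlinarith

end BesselMain

namespace BesselMain
open BesselAux BesselAux2 BesselAux3

lemma alg1 (s q b0 b1 : ℝ) (hq : q ≠ 0) (hss : q * q = s) :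
    q * b0 - b1 / (2*q) = 1/(2*q) * b1 + q * (b0 - b1/s) := by
  subst hss; field_simp; linear_combination (-b1) * (rfl : q*q = q*q)

lemma alg2 (s q b0 b1 : ℝ) (hq : q ≠ 0) (hss : q * q = s) :
    (q * b0 - b1/(2*q))^2 + (q*b1)^2 = (s * (b0^2+b1^2) - b0*b1) + b1^2/(4*s) := by
  subst hss; field_simp; ring

noncomputable def v (s : ℝ) : ℝ := Real.sqrt s * J1 s
noncomputable def w (s : ℝ) : ℝ := Real.sqrt s * J0 s - J1 s / (2 * Real.sqrt s)

lemma hasDerivAt_v {s : ℝ} (hs : 0 < s) : HasDerivAt v (w s) s := by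
  have hsq : Real.sqrt s ≠ 0 := by positivity
  have hsqs : Real.sqrt s ^ 2 = s := Real.sq_sqrt hs.le
  have h1 : HasDerivAt Real.sqrt (1 / (2 * Real.sqrt s)) s := Real.hasDerivAt_sqrt hs.ne'
  have h2 : HasDerivAt J1 (J0 s - J1 s / s) s := hasDerivAt_J1 hs.ne'
  have := h1.fun_mul h2
  refine this.congr_deriv ?_
  unfold w
  exact (alg1 s (Real.sqrt s) (J0 s) (J1 s) hsq (Real.mul_self_sqrt hs.le)).symm

lemma vw_sq_ge {s : ℝ} (hs : 1 ≤ s) : 1/40 ≤ (w s)^2 + (v s)^2 := by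
  have hs0 : (0:ℝ) < s := by linarith
  have hsq : Real.sqrt s ≠ 0 := by positivity
  have hsqs : Real.sqrt s ^ 2 = s := Real.sq_sqrt hs0.le
  have hP := P_ge hs
  have key : (w s)^2 + (v s)^2 = P s + (J1 s)^2 / (4*s) := by
    unfold w v P
    exact alg2 s (Real.sqrt s) (J0 s) (J1 s) hsq (Real.mul_self_sqrt hs0.le)
  rw [key]
  have : 0 ≤ (J1 s)^2 / (4*s) := by positivity
  linarith

lemma v_sq_le {s : ℝ} (hs : 1 ≤ s) : (v s)^2 ≤ 42 := by
  have hs0 : (0:ℝ) < s := by linarith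
  have hsqs : Real.sqrt s ^ 2 = s := Real.sq_sqrt hs0.le
  have hE := E_le hs
  have : (v s)^2 = s * (J1 s)^2 := by unfold v; rw [mul_pow, hsqs]
  nlinarith [mul_nonneg hs0.le (sq_nonneg (J0 s))]

lemma w_abs_le {s : ℝ} (hs : 1 ≤ s) : |w s| ≤ 12 := by
  have hs0 : (0:ℝ) < s := by linarith
  have hsq : Real.sqrt s ≠ 0 := by positivity
  have hsqpos : 0 < Real.sqrt s := Real.sqrt_pos.mpr hs0
  have hsqs : Real.sqrt s ^ 2 = s := Real.sq_sqrt hs0.le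
  have hE := E_le hs
  have hs1 : 1 ≤ Real.sqrt s := by
    rw [show (1:ℝ) = Real.sqrt 1 by simp]
    exact Real.sqrt_le_sqrt hs
  have hw2 : (w s)^2 ≤ 144 := by
    have h1 : (Real.sqrt s * J0 s)^2 = s * (J0 s)^2 := by rw [mul_pow, hsqs]
    have h2 : (J1 s / (2 * Real.sqrt s))^2 = (J1 s)^2 / (4*s) := by
      rw [div_pow, mul_pow, hsqs]; norm_num
    have hJ1 : (J1 s)^2 ≤ 42 := by nlinarith [mul_nonneg hs0.le (sq_nonneg (J0 s)), sq_nonneg (J1 s)]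
    have hwsq : (w s)^2 ≤ 2*(Real.sqrt s * J0 s)^2 + 2*(J1 s / (2 * Real.sqrt s))^2 := by
      unfold w
      nlinarith [sq_nonneg (Real.sqrt s * J0 s + J1 s / (2 * Real.sqrt s))]
    rw [h1, h2] at hwsq
    have h4 : (J1 s)^2 / (4*s) ≤ (J1 s)^2 / 4 := by
      apply div_le_div_of_nonneg_left (sq_nonneg _) (by norm_num) (by linarith)
    nlinarith [mul_nonneg hs0.le (sq_nonneg (J1 s)), mul_nonneg hs0.le (sq_nonneg (J0 s))]
  have := abs_nonneg (w s)
  nlinarith [sq_abs (w s)]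

lemma continuous_J1 : Continuous J1 :=
  continuous_iff_continuousAt.mpr
    (fun s => (BesselAux.hasDerivAt_besselJ 1 (by norm_num) s).continuousAt)

lemma continuous_J0' : Continuous J0 :=
  continuous_iff_continuousAt.mpr (fun s => (hasDerivAt_J0 s).continuousAt)

lemma continuousOn_w : ContinuousOn w (Set.Ici 1) := by
  unfold w
  apply ContinuousOn.sub
  · exact (Real.continuous_sqrt.mul continuous_J0').continuousOn
  · apply ContinuousOn.div continuous_J1.continuousOn
      (continuous_const.fun_mul Real.continuous_sqrt).continuousOn
    intro t ht
    have ht1 : (1:ℝ) ≤ t := ht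
    have : 0 < Real.sqrt t := Real.sqrt_pos.mpr (by linarith)
    positivity

end BesselMain

namespace BesselMain
open BesselAux BesselAux2 BesselAux3

lemma continuous_v : Continuous v := Real.continuous_sqrt.mul continuous_J1

lemma exists_big {a : ℝ} (ha : 1 ≤ a) : ∃ t ∈ Set.Icc a (a+9), 1/160 ≤ (v t)^2 := by
  by_contra hcon
  push_neg at hcon
  have hsub : Set.Icc a (a+9) ⊆ Set.Ici 1 := fun t ht => le_trans ha ht.1
  have hw2 : ∀ t ∈ Set.Icc a (a+9), 3/160 ≤ (w t)^2 := by
    intro t ht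
    have := vw_sq_ge (hsub ht)
    have := hcon t ht
    linarith
  have hwlarge : ∀ t ∈ Set.Icc a (a+9), 1/8 < |w t| := by
    intro t ht
    have h := hw2 t ht
    nlinarith [sq_abs (w t), abs_nonneg (w t)]
  have contw : ContinuousOn w (Set.Icc a (a+9)) := continuousOn_w.mono hsub
  have hmem_a : a ∈ Set.Icc a (a+9) := by constructor <;> linarith
  have hmem_b : a+9 ∈ Set.Icc a (a+9) := by constructor <;> linarith
  have hva : (v a)^2 < 1/160 := hcon a hmem_a
  have hvb : (v (a+9))^2 < 1/160 := hcon (a+9) hmem_b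
  have hva' : |v a| < 1/12 := by nlinarith [sq_abs (v a), abs_nonneg (v a)]
  have hvb' : |v (a+9)| < 1/12 := by nlinarith [sq_abs (v (a+9)), abs_nonneg (v (a+9))]
  have hva2 := abs_lt.mp hva'
  have hvb2 := abs_lt.mp hvb'
  have hwa0 : w a ≠ 0 := by
    intro h0
    have h := hwlarge a hmem_a
    rw [h0, abs_zero] at h
    linarith
  rcases lt_or_gt_of_ne hwa0 with hwa | hwa
  · -- w a < 0 : show ∀ t, w t ≤ -1/8
    have hneg : ∀ t ∈ Set.Icc a (a+9), w t ≤ -(1/8) := by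
      intro t ht
      by_contra hpos
      push_neg at hpos
      have hwt : 1/8 < w t := by
        rcases lt_abs.mp (hwlarge t ht) with h | h
        · exact h
        · linarith
      have hat : a ≤ t := ht.1
      have hiv := intermediate_value_Icc hat (contw.mono (Set.Icc_subset_Icc le_rfl ht.2))
      have h0mem : (0:ℝ) ∈ Set.Icc (w a) (w t) := ⟨hwa.le, by linarith⟩
      obtain ⟨c, hc, hwc⟩ := hiv h0mem
      have : 1/8 < |w c| := hwlarge c (Set.Icc_subset_Icc le_rfl ht.2 hc)
      rw [hwc, abs_zero] at this
      linarith
    have hmono : MonotoneOn (fun t => -v t - t/8) (Set.Icc a (a+9)) := by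
      apply monotoneOn_of_deriv_nonneg (convex_Icc a (a+9))
      · exact (continuous_v.neg.sub (continuous_id.div_const 8)).continuousOn
      · intro t ht
        rw [interior_Icc] at ht
        have ht1 : (1:ℝ) ≤ t := by have := ht.1; linarith
        have hd : HasDerivAt (fun t => -v t - t/8) (-(w t) - 1/8) t :=
          ((hasDerivAt_v (by linarith)).neg).sub ((hasDerivAt_id t).div_const 8)
        exact hd.differentiableAt.differentiableWithinAt
      · intro t ht
        rw [interior_Icc] at ht
        have ht1 : (1:ℝ) ≤ t := by have := ht.1; linarith
        have hd : HasDerivAt (fun t => -v t - t/8) (-(w t) - 1/8) t :=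
          ((hasDerivAt_v (by linarith)).neg).sub ((hasDerivAt_id t).div_const 8)
        rw [hd.deriv]
        have := hneg t ⟨ht.1.le, ht.2.le⟩
        linarith
    have := hmono hmem_a hmem_b (by linarith)
    simp only at this
    linarith
  · -- w a > 0
    have hpos : ∀ t ∈ Set.Icc a (a+9), 1/8 ≤ w t := by
      intro t ht
      by_contra hneg'
      push_neg at hneg'
      have hwt : w t < -(1/8) := by
        rcases lt_abs.mp (hwlarge t ht) with h | h
        · linarith
        · linarith
      have hat : a ≤ t := ht.1
      have hiv := intermediate_value_Icc' hat (contw.mono (Set.Icc_subset_Icc le_rfl ht.2))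
      have h0mem : (0:ℝ) ∈ Set.Icc (w t) (w a) := ⟨by linarith, hwa.le⟩
      obtain ⟨c, hc, hwc⟩ := hiv h0mem
      have : 1/8 < |w c| := hwlarge c (Set.Icc_subset_Icc le_rfl ht.2 hc)
      rw [hwc, abs_zero] at this
      linarith
    have hmono : MonotoneOn (fun t => v t - t/8) (Set.Icc a (a+9)) := by
      apply monotoneOn_of_deriv_nonneg (convex_Icc a (a+9))
      · exact (continuous_v.sub (continuous_id.div_const 8)).continuousOn
      · intro t ht
        rw [interior_Icc] at ht
        have ht1 : (1:ℝ) ≤ t := by have := ht.1; linarith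
        have hd : HasDerivAt (fun t => v t - t/8) (w t - 1/8) t :=
          (hasDerivAt_v (by linarith)).sub ((hasDerivAt_id t).div_const 8)
        exact hd.differentiableAt.differentiableWithinAt
      · intro t ht
        rw [interior_Icc] at ht
        have ht1 : (1:ℝ) ≤ t := by have := ht.1; linarith
        have hd : HasDerivAt (fun t => v t - t/8) (w t - 1/8) t :=
          (hasDerivAt_v (by linarith)).sub ((hasDerivAt_id t).div_const 8)
        rw [hd.deriv]
        have := hpos t ⟨ht.1.le, ht.2.le⟩
        linarith
    have := hmono hmem_a hmem_b (by linarith)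
    simp only at this
    linarith

lemma exists_good {a : ℝ} (ha : 1 ≤ a) :
    ∃ t, a ≤ t ∧ t + 1/400 ≤ a + 10 ∧ ∀ s ∈ Set.Icc t (t+1/400), 1/500 ≤ (v s)^2 := by
  obtain ⟨t, ht, hvt⟩ := exists_big ha
  refine ⟨t, ht.1, by linarith [ht.2], ?_⟩
  intro u hu
  have htl : 1 ≤ t := le_trans ha ht.1
  have hsub : Set.Icc t (t+1/400) ⊆ Set.Ici 1 := fun z hz => le_trans htl hz.1
  have hlip : ‖v u - v t‖ ≤ 12 * ‖u - t‖ := by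
    apply Convex.norm_image_sub_le_of_norm_hasDerivWithin_le
      (f' := w) (s := Set.Icc t (t+1/400))
      (fun z hz => (hasDerivAt_v (by have h1z : (1:ℝ) ≤ z := hsub hz; linarith : (0:ℝ) < z)).hasDerivWithinAt)
      (fun z hz => by rw [Real.norm_eq_abs]; exact w_abs_le (hsub hz))
      (convex_Icc _ _) ⟨le_rfl, by linarith⟩ hu
  have hut : |u - t| ≤ 1/400 := by
    rw [abs_le]; constructor <;> [linarith [hu.1]; linarith [hu.2]]
  have hdiff : |v u - v t| ≤ 3/100 := by
    rw [Real.norm_eq_abs, Real.norm_eq_abs] at hlip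
    nlinarith [abs_nonneg (u - t)]
  have hvt13 : 1/13 ≤ |v t| := by
    by_contra hc
    push_neg at hc
    nlinarith [sq_abs (v t), abs_nonneg (v t)]
  have h1 : 1/13 - 3/100 ≤ |v u| := by
    have := abs_sub_abs_le_abs_sub (v t) (v u)
    rw [abs_sub_comm] at hdiff
    linarith
  have h1' : (61/1300 : ℝ) ≤ |v u| := by linarith
  have h2 : (61/1300:ℝ)*(61/1300) ≤ |v u| * |v u| :=
    mul_le_mul h1' h1' (by norm_num) (abs_nonneg _)
  nlinarith [sq_abs (v u)]

end BesselMain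

namespace BesselMain
open BesselAux BesselAux2 BesselAux3

set_option maxHeartbeats 1000000 in
lemma core_estimate (x : ℝ) (hx : 0 < x) {lam mu : ℝ}
    (hmu1 : 1/(2*x) ≤ mu) (hmu2 : mu ≤ 1/x)
    (hlam : 580/x ≤ lam) (hv : 1/500 ≤ (v (x*lam))^2) :
    1/(128000000 * x^3 * lam)
      ≤ |lam * J1 (x*lam) * J0 (x*mu) - mu * J1 (x*mu) * J0 (x*lam)| ^ 4
          / (lam^2 - mu^2)^2 * (lam*mu) := by
  have hmu0 : 0 < mu := lt_of_lt_of_le (by positivity) hmu1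
  have hlam0 : 0 < lam := lt_of_lt_of_le (by positivity) hlam
  have hs : (580:ℝ) ≤ x * lam := by
    rw [show (580:ℝ) = x * (580/x) by field_simp]
    exact mul_le_mul_of_nonneg_left hlam hx.le
  have hs1 : (1:ℝ) ≤ x*lam := by linarith
  have hs0 : (0:ℝ) < x*lam := by linarith
  have ht0 : 0 ≤ x*mu := by positivity
  have ht1 : x*mu ≤ 1 := by
    rw [show (1:ℝ) = x * (1/x) by field_simp]
    exact mul_le_mul_of_nonneg_left hmu2 hx.le
  -- J0 at x*mu is at least 1/2
  have hJ0mu : 1/2 ≤ J0 (x*mu) := J0_ge ht0 ht1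
  -- |J1 (x*mu)| ≤ 1
  have hJ1mu : |J1 (x*mu)| ≤ 1 := le_trans (abs_J1_le ht0 ht1) ht1
  -- J1(x lam)^2 ≥ 1/(500 (x lam))
  have hvs : (v (x*lam))^2 = (x*lam) * (J1 (x*lam))^2 := by
    unfold v
    rw [mul_pow, Real.sq_sqrt hs0.le]
  have hJ1lam : 1/(500*(x*lam)) ≤ (J1 (x*lam))^2 := by
    rw [hvs] at hv
    rw [div_le_iff₀ (by positivity)]
    nlinarith
  -- J0(x lam)^2 ≤ 42/(x lam)
  have hJ0lam : (J0 (x*lam))^2 ≤ 42/(x*lam) := by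
    have := E_le hs1
    rw [le_div_iff₀ hs0]
    nlinarith [mul_nonneg hs0.le (sq_nonneg (J1 (x*lam)))]
  set M : ℝ := lam * J1 (x*lam) * J0 (x*mu) with hM
  set S : ℝ := mu * J1 (x*mu) * J0 (x*lam) with hS
  -- M^2 ≥ lam/(2000 x)
  have hM2 : lam/(2000*x) ≤ M^2 := by
    have h1 : M^2 = lam^2 * (J1 (x*lam))^2 * (J0 (x*mu))^2 := by rw [hM]; ring
    have h2 : (1/2:ℝ)^2 ≤ (J0 (x*mu))^2 := by nlinarith
    have h3 : lam^2 * (1/(500*(x*lam))) = lam/(500*x) := by field_simp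
    rw [h1]
    calc lam/(2000*x) = (lam^2 * (1/(500*(x*lam)))) * (1/4) := by rw [h3]; ring
      _ ≤ (lam^2 * (J1 (x*lam))^2) * (J0 (x*mu))^2 := by
          apply mul_le_mul
          · exact mul_le_mul_of_nonneg_left hJ1lam (by positivity)
          · nlinarith
          · norm_num
          · positivity
      _ = lam^2 * (J1 (x*lam))^2 * (J0 (x*mu))^2 := by ring
  -- S^2 ≤ 42/(x^3 lam)
  have hS2 : S^2 ≤ 42/(x^3*lam) := by
    have h1 : S^2 = mu^2 * (J1 (x*mu))^2 * (J0 (x*lam))^2 := by rw [hS]; ring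
    have h2 : mu^2 ≤ 1/x^2 := by
      have : mu^2 ≤ (1/x)^2 := by nlinarith
      calc mu^2 ≤ (1/x)^2 := this
        _ = 1/x^2 := by field_simp
    have h3 : (J1 (x*mu))^2 ≤ 1 := by nlinarith [sq_abs (J1 (x*mu)), abs_nonneg (J1 (x*mu))]
    rw [h1]
    calc mu^2 * (J1 (x*mu))^2 * (J0 (x*lam))^2
        ≤ (1/x^2) * 1 * (42/(x*lam)) := by
          apply mul_le_mul
          · apply mul_le_mul h2 h3 (sq_nonneg _) (by positivity)
          · exact hJ0lam
          · exact sq_nonneg _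
          · positivity
      _ = 42/(x^3*lam) := by field_simp
  -- S^2 ≤ M^2/4
  have hSM : S^2 ≤ M^2/4 := by
    have key : 42/(x^3*lam) ≤ lam/(8000*x) := by
      rw [div_le_div_iff₀ (by positivity) (by positivity)]
      have : (580:ℝ)^2 ≤ (x*lam)^2 := by nlinarith
      nlinarith [hx.le, hlam0.le]
    have hM2' : 4*(lam/(8000*x)) = lam/(2000*x) := by ring
    linarith [hS2, hM2, key]
  have habs : |S| ≤ |M|/2 := by
    have h1 : |S|^2 ≤ (|M|/2)^2 := by
      rw [sq_abs]
      have : (|M|/2)^2 = M^2/4 := by rw [div_pow, sq_abs]; norm_num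
      linarith [this ▸ hSM]
    nlinarith [abs_nonneg S, abs_nonneg M]
  have hAM : |M|/2 ≤ |M - S| := by
    have := abs_sub_abs_le_abs_sub M S
    linarith
  -- A^2 ≥ lam/(8000 x)
  have hA2 : lam/(8000*x) ≤ |M - S|^2 := by
    have h1 : (|M|/2)^2 ≤ |M - S|^2 := by
      apply pow_le_pow_left₀ (by positivity) hAM
    have h2 : (|M|/2)^2 = M^2/4 := by rw [div_pow, sq_abs]; norm_num
    have hM2' : 4*(lam/(8000*x)) = lam/(2000*x) := by ring
    linarith [hM2]
  have hA4 : lam^2/(64000000*x^2) ≤ |M - S|^4 := by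
    have h1 : |M - S|^4 = (|M - S|^2)^2 := by ring
    rw [h1]
    have h2 : (lam/(8000*x))^2 ≤ (|M - S|^2)^2 :=
      pow_le_pow_left₀ (by positivity) hA2 2
    calc lam^2/(64000000*x^2) = (lam/(8000*x))^2 := by field_simp; ring
      _ ≤ _ := h2
  -- denominator
  have hmulam : mu < lam := by
    calc mu ≤ 1/x := hmu2
      _ < 580/x := by
          rw [div_lt_div_iff₀ (by positivity) (by positivity)]
          nlinarith
      _ ≤ lam := hlam
  have hden_pos : (0:ℝ) < (lam^2 - mu^2)^2 := by
    have h : mu^2 < lam^2 := by nlinarith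
    have : 0 < lam^2 - mu^2 := by linarith
    positivity
  have hden_le : (lam^2 - mu^2)^2 ≤ (lam^2)^2 := by
    have h : mu^2 < lam^2 := by nlinarith
    nlinarith [sq_nonneg mu, sq_nonneg lam]
  have step1 : lam^2/(64000000*x^2) / (lam^2)^2 ≤ |M - S|^4 / (lam^2 - mu^2)^2 :=
    div_le_div₀ (by positivity) hA4 hden_pos hden_le
  have step2 : lam * (1/(2*x)) ≤ lam * mu := mul_le_mul_of_nonneg_left hmu1 hlam0.le
  calc 1/(128000000 * x^3 * lam)
      = (lam^2/(64000000*x^2)) / (lam^2)^2 * (lam * (1/(2*x))) := by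
        field_simp
        ring
    _ ≤ |M - S|^4 / (lam^2 - mu^2)^2 * (lam * mu) := by
        apply mul_le_mul step1 step2 (by positivity) (by positivity)
    _ = |lam * J1 (x*lam) * J0 (x*mu) - mu * J1 (x*mu) * J0 (x*lam)| ^ 4
          / (lam^2 - mu^2)^2 * (lam*mu) := by rw [hM, hS]

end BesselMain

namespace BesselMain
open scoped ENNReal NNReal

lemma harmonic_top {c : ℝ} (hc : 0 < c) :
    ∑' n : ℕ, ENNReal.ofReal (c/(590+10*(n:ℝ))) = ⊤ := by
  by_contra hne
  set g : ℕ → ℝ := fun n => c/(590+10*(n:ℝ)) with hg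
  have hgpos : ∀ n, 0 < g n := fun n => by
    have : (0:ℝ) ≤ (n:ℝ) := Nat.cast_nonneg n
    positivity
  have h1 : (∑' n, ((g n).toNNReal : ℝ≥0∞)) ≠ ⊤ := by
    simp only [show ∀ r:ℝ, ((r.toNNReal : ℝ≥0∞)) = ENNReal.ofReal r from fun r => rfl]
    exact hne
  have h2 : Summable (fun n => (g n).toNNReal) := ENNReal.tsum_coe_ne_top_iff_summable.mp h1
  have h3 : Summable g := by
    have := NNReal.summable_coe.mpr h2
    convert this using 1
    funext n
    rw [Real.coe_toNNReal _ (hgpos n).le]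
  have h4 : Summable (fun n : ℕ => 1/((n:ℝ)+1)) := by
    apply Summable.of_nonneg_of_le (fun n => by positivity) _ (h3.mul_left (600/c))
    intro n
    have hn : (0:ℝ) ≤ (n:ℝ) := Nat.cast_nonneg n
    rw [hg]
    rw [div_le_iff₀ (by positivity)]
    have : (600/c) * (c/(590+10*(n:ℝ))) = 600/(590+10*(n:ℝ)) := by
      field_simp
    rw [this]
    rw [div_mul_eq_mul_div, le_div_iff₀ (by positivity)]
    nlinarith
  have h5 : Summable (fun n : ℕ => 1/(n:ℝ)) := by
    rw [← summable_nat_add_iff 1]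
    refine h4.congr (fun n => ?_)
    push_cast
    ring
  exact Real.not_summable_one_div_natCast h5

end BesselMain


set_option maxHeartbeats 1000000 in
/-- Type D singular point, `q = 2` (`r = 0`), `k = 2`: the Plancherel test integral over the
Weyl chamber `{λ₁ > λ₂ > 0}` diverges, which shows failure of `L¹`-`L²` dichotomy. -/
theorem stmt_11 (x : ℝ) (hx : 0 < x) :
    ∫⁻ p in {p : ℝ × ℝ | 0 < p.2 ∧ p.2 < p.1},
      ENNReal.ofReal
        (|p.1 * besselJ 1 (x * p.1) * besselJ 0 (x * p.2)
            - p.2 * besselJ 1 (x * p.2) * besselJ 0 (x * p.1)| ^ 4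
          / (p.1 ^ 2 - p.2 ^ 2) ^ 2 * (p.1 * p.2)) = ⊤ := by
  classical
  set F : ℝ × ℝ → ENNReal := fun p => ENNReal.ofReal
        (|p.1 * besselJ 1 (x * p.1) * besselJ 0 (x * p.2)
            - p.2 * besselJ 1 (x * p.2) * besselJ 0 (x * p.1)| ^ 4
          / (p.1 ^ 2 - p.2 ^ 2) ^ 2 * (p.1 * p.2)) with hF
  have hex : ∀ n : ℕ, ∃ t, 580 + 10*(n:ℝ) ≤ t ∧ t + 1/400 ≤ (580 + 10*(n:ℝ)) + 10 ∧
      ∀ s ∈ Set.Icc t (t+1/400), 1/500 ≤ (BesselMain.v s)^2 := by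
    intro n
    apply BesselMain.exists_good
    have : (0:ℝ) ≤ (n:ℝ) := Nat.cast_nonneg n
    linarith
  choose T hT1 hT2 hT3 using hex
  have hT580 : ∀ n, (580:ℝ) ≤ T n := fun n => by
    have h0 : (0:ℝ) ≤ (n:ℝ) := Nat.cast_nonneg n
    linarith [hT1 n]
  have hTub : ∀ n, T n + 1/400 ≤ 590 + 10*(n:ℝ) := fun n => by linarith [hT2 n]
  set I : ℕ → Set ℝ := fun n => Set.Ico (T n / x) ((T n + 1/400)/x) with hI
  set K : Set ℝ := Set.Icc (1/(2*x)) (1/x) with hK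
  set c : ℕ → ENNReal := fun n => ENNReal.ofReal ((1/(128000000 * x^2))/(590 + 10*(n:ℝ))) with hc
  -- pointwise estimate
  have hpoint : ∀ n : ℕ, ∀ p : ℝ × ℝ, p ∈ I n ×ˢ K → c n ≤ F p := by
    intro n p hp
    obtain ⟨hp1, hp2⟩ := hp
    rw [hc, hF]
    apply ENNReal.ofReal_le_ofReal
    have hp1a : T n / x ≤ p.1 := hp1.1
    have hp1b : p.1 ≤ (T n + 1/400)/x := hp1.2.le
    have hlam580 : 580/x ≤ p.1 := le_trans (by gcongr; exact hT580 n) hp1a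
    have hp1pos : 0 < p.1 := lt_of_lt_of_le (by positivity) hlam580
    have hxl : x * p.1 ∈ Set.Icc (T n) (T n + 1/400) := by
      constructor
      · calc T n = x * (T n / x) := by field_simp
          _ ≤ x * p.1 := by gcongr
      · calc x * p.1 ≤ x * ((T n + 1/400)/x) := by gcongr
          _ = T n + 1/400 := by field_simp
    have hv := hT3 n _ hxl
    have hcore := BesselMain.core_estimate x hx hp2.1 hp2.2 hlam580 hv
    unfold BesselMain.J0 BesselMain.J1 at hcore
    refine le_trans ?_ hcore
    have hxp : x * p.1 ≤ 590 + 10*(n:ℝ) := by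
      calc x * p.1 ≤ x * ((T n + 1/400)/x) := by gcongr
        _ = T n + 1/400 := by field_simp
        _ ≤ 590 + 10*(n:ℝ) := hTub n
    have hxppos : 0 < x * p.1 := by positivity
    have h6 : 1/(590+10*(n:ℝ)) ≤ 1/(x*p.1) := one_div_le_one_div_of_le hxppos hxp
    calc (1/(128000000 * x^2))/(590 + 10*(n:ℝ))
        = (1/(128000000*x^2)) * (1/(590+10*(n:ℝ))) := by ring
      _ ≤ (1/(128000000*x^2)) * (1/(x*p.1)) := by
          apply mul_le_mul_of_nonneg_left h6 (by positivity)
      _ = 1/(128000000*x^3*p.1) := by field_simp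
  have hmeas : ∀ n, MeasurableSet (I n ×ˢ K) := fun n =>
    measurableSet_Ico.prod measurableSet_Icc
  have hdisj : Pairwise (Function.onFun Disjoint (fun n => I n ×ˢ K)) := by
    have key : ∀ m n : ℕ, m < n → Disjoint (I m ×ˢ K) (I n ×ˢ K) := by
      intro m n hmn
      rw [Set.disjoint_left]
      rintro p ⟨hpm, _⟩ ⟨hpn, _⟩
      have h1 : p.1 < (T m + 1/400)/x := hpm.2
      have h2 : T n / x ≤ p.1 := hpn.1
      have hcast : (m:ℝ) + 1 ≤ (n:ℝ) := by exact_mod_cast hmn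
      have h3 : T m + 1/400 ≤ T n := by linarith [hTub m, hT1 n]
      have h4 : (T m + 1/400)/x ≤ T n / x := by gcongr
      linarith
    intro m n hmn
    rcases hmn.lt_or_gt with h | h
    · exact key m n h
    · exact (key n m h).symm
  have hsub : (⋃ n, I n ×ˢ K) ⊆ {p : ℝ × ℝ | 0 < p.2 ∧ p.2 < p.1} := by
    intro p hp
    obtain ⟨n, hpn⟩ := Set.mem_iUnion.mp hp
    obtain ⟨hp1, hp2⟩ := hpn
    constructor
    · exact lt_of_lt_of_le (by positivity) hp2.1
    · have ha : p.2 ≤ 1/x := hp2.2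
      have hb : T n / x ≤ p.1 := hp1.1
      have hcc : (1:ℝ)/x < 580/x := by
        rw [div_lt_div_iff₀ hx hx]
        nlinarith
      have hdd : (580:ℝ)/x ≤ T n / x := by gcongr; exact hT580 n
      calc p.2 ≤ 1/x := ha
        _ < 580/x := hcc
        _ ≤ T n/x := hdd
        _ ≤ p.1 := hb
  have step1 : ∫⁻ p in (⋃ n, I n ×ˢ K), F p ≤
      ∫⁻ p in {p : ℝ × ℝ | 0 < p.2 ∧ p.2 < p.1}, F p := lintegral_mono_set hsub
  have step2 : ∫⁻ p in (⋃ n, I n ×ˢ K), F p = ∑' n, ∫⁻ p in I n ×ˢ K, F p :=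
    lintegral_iUnion hmeas hdisj F
  have hvol : ∀ n, volume (I n ×ˢ K) = ENNReal.ofReal (1/(400*x)) * ENNReal.ofReal (1/(2*x)) := by
    intro n
    rw [hI, hK]
    rw [MeasureTheory.Measure.volume_eq_prod, MeasureTheory.Measure.prod_prod,
      Real.volume_Ico, Real.volume_Icc]
    congr 2
    · field_simp; ring
    · field_simp; ring
  have step3 : ∀ n, c n * (ENNReal.ofReal (1/(400*x)) * ENNReal.ofReal (1/(2*x)))
      ≤ ∫⁻ p in I n ×ˢ K, F p := by
    intro n
    have h := setLIntegral_mono' (μ := volume) (hmeas n)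
      (f := fun _ => c n) (g := F) (fun p hp => hpoint n p hp)
    rw [setLIntegral_const, hvol n] at h
    exact h
  have hsum : ∑' n, (c n * (ENNReal.ofReal (1/(400*x)) * ENNReal.ofReal (1/(2*x)))) = ⊤ := by
    rw [ENNReal.tsum_mul_right, hc]
    rw [BesselMain.harmonic_top (by positivity : (0:ℝ) < 1/(128000000 * x^2))]
    rw [ENNReal.top_mul]
    apply mul_ne_zero <;>
      simp only [ne_eq, ENNReal.ofReal_eq_zero, not_le] <;> positivity
  rw [eq_top_iff]
  calc (⊤ : ENNReal) = ∑' n, (c n * (ENNReal.ofReal (1/(400*x)) * ENNReal.ofReal (1/(2*x)))) :=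
        hsum.symm
    _ ≤ ∑' n, ∫⁻ p in I n ×ˢ K, F p := ENNReal.tsum_le_tsum step3
    _ = ∫⁻ p in (⋃ n, I n ×ˢ K), F p := step2.symm
    _ ≤ _ := step1
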